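/- Let p be an odd prime and W a 2-dimensional 𝔽ₚ-vector space with a non-degenerate alternating bilinear form b. Then the subspace of S^p(W) spanned by elements x^(p-1)·y with b(x,y)=0 has dimension 2, while S^p(W) itself has dimension p+1. -/

import Mathlib

open MvPolynomial

private lemma degree_fin_two (d : Fin 2 →₀ ℕ) : d.degree = d 0 + d 1 := by
  rw [Finsupp.degree_apply, Finset.sum_subset (Finset.subset_univ _)
    (fun i _ hi => by simpa using Finsupp.notMem_support_iff.mp hi)]
  exact Fin.sum_univ_two d

private lemma finrank_homog (p : ℕ) [Fact p.Prime] :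
    Module.finrank (ZMod p)
      (homogeneousSubmodule (Fin 2) (ZMod p) p : Submodule (ZMod p) _) = p + 1 := by
  rw [homogeneousSubmodule_eq_finsupp_supported]
  have e : {d : Fin 2 →₀ ℕ | d.degree = p} ≃ Fin (p + 1) :=
    { toFun := fun d => ⟨d.1 0, by
        have h := degree_fin_two d.1
        have hd := d.2
        simp only [Set.mem_setOf_eq] at hd
        omega⟩
      invFun := fun k => ⟨Finsupp.single 0 (k : ℕ) + Finsupp.single 1 (p - (k : ℕ)), by
        have hk : (k : ℕ) ≤ p := Nat.lt_succ_iff.mp k.2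
        simp only [Set.mem_setOf_eq, degree_fin_two, Finsupp.add_apply,
          Finsupp.single_apply]
        norm_num
        omega⟩
      left_inv := fun d => by
        have h := degree_fin_two d.1
        have hd := d.2
        simp only [Set.mem_setOf_eq] at hd
        ext i
        fin_cases i <;>
          simp only [Finsupp.add_apply, Finsupp.single_apply] <;> norm_num <;> omega
      right_inv := fun k => by
        ext
        simp [Finsupp.single_apply] }
  have le : (AddMonoidAlgebra.supported (ZMod p) (ZMod p) {d : Fin 2 →₀ ℕ | d.degree = p}) ≃ₗ[ZMod p]
      (Fin (p + 1) →₀ ZMod p) :=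
    (AddMonoidAlgebra.supportedEquivFinsupp _).trans (Finsupp.domLCongr e)
  refine le.finrank_eq.trans ?_
  rw [Module.finrank_finsupp_self, Fintype.card_fin]

theorem stmt4 (p : ℕ) [Fact p.Prime] (hodd : Odd p)
    (b : (Fin 2 → ZMod p) →ₗ[ZMod p] (Fin 2 → ZMod p) →ₗ[ZMod p] ZMod p)
    (halt : ∀ v, b v v = 0)
    (hnd : ∀ v : Fin 2 → ZMod p, (∀ w, b v w = 0) → v = 0) :
    Module.finrank (ZMod p)
      (Submodule.span (ZMod p)
        {f : MvPolynomial (Fin 2) (ZMod p) |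
          ∃ v w : Fin 2 → ZMod p, b v w = 0 ∧
            f = (∑ i, C (v i) * X i) ^ (p - 1) * (∑ i, C (w i) * X i)}) = 2 ∧
    Module.finrank (ZMod p)
      (homogeneousSubmodule (Fin 2) (ZMod p) p : Submodule (ZMod p) _) = p + 1 := by
  have hp : p.Prime := Fact.out
  have hp1 : 1 ≤ p := hp.one_lt.le
  refine ⟨?_, finrank_homog p⟩
  set L : (Fin 2 → ZMod p) → MvPolynomial (Fin 2) (ZMod p) :=
    fun v => ∑ i, C (v i) * X i with hL
  set s0 : Fin 2 → ZMod p := Pi.single 0 1 with hs0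
  set s1 : Fin 2 → ZMod p := Pi.single 1 1 with hs1
  set D : ZMod p := b s0 s1 with hD
  have hdecomp : ∀ v : Fin 2 → ZMod p, v = v 0 • s0 + v 1 • s1 := by
    intro v
    funext i
    fin_cases i <;> simp [hs0, hs1, Pi.single_apply]
  -- the form is a multiple of the determinant
  have hform : ∀ v w : Fin 2 → ZMod p, b v w = (v 0 * w 1 - v 1 * w 0) * D := by
    intro v w
    have hanti : b s1 s0 = -D := by
      have h := halt (s0 + s1)
      simp only [map_add, LinearMap.add_apply, halt] at h
      linear_combination h
    conv_lhs => rw [hdecomp v, hdecomp w]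
    simp only [map_add, map_smul, LinearMap.add_apply, LinearMap.smul_apply,
      smul_eq_mul, halt s0, halt s1, hanti]
    ring
  have hDne : D ≠ 0 := by
    intro h0
    have : s0 = 0 := hnd s0 (fun w => by rw [hform]; simp [hs0, h0])
    have := congrFun this 0
    simp [hs0] at this
  -- orthogonality forces proportionality
  have hprop : ∀ v w : Fin 2 → ZMod p, v ≠ 0 → b v w = 0 → ∃ c : ZMod p, w = c • v := by
    intro v w hv hbw
    rw [hform] at hbw
    have hdet : v 0 * w 1 - v 1 * w 0 = 0 := by
      rcases mul_eq_zero.mp hbw with h | h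
      · exact h
      · exact absurd h hDne
    by_cases h0 : v 0 = 0
    · have h1 : v 1 ≠ 0 := by
        intro h1
        apply hv
        funext i; fin_cases i <;> simp [h0, h1]
      refine ⟨w 1 / v 1, ?_⟩
      have hw0 : w 0 = 0 := by
        have hmul : v 1 * w 0 = 0 := by linear_combination -hdet + w 1 * h0
        rcases mul_eq_zero.mp hmul with h | h
        · exact absurd h h1
        · exact h
      funext i
      fin_cases i
      · show w 0 = w 1 / v 1 * v 0
        rw [h0, hw0, mul_zero]
      · show w 1 = w 1 / v 1 * v 1
        rw [div_mul_cancel₀ _ h1]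
    · refine ⟨w 0 / v 0, ?_⟩
      funext i
      fin_cases i
      · show w 0 = w 0 / v 0 * v 0
        rw [div_mul_cancel₀ _ h0]
      · show w 1 = w 0 / v 0 * v 1
        rw [div_mul_eq_mul_div, eq_div_iff h0]
        linear_combination hdet
  -- frobenius on linear forms
  have hLpow : ∀ v : Fin 2 → ZMod p, (L v) ^ p = ∑ i, C (v i) * (X i) ^ p := by
    intro v
    rw [hL]
    simp only [Fin.sum_univ_two]
    rw [add_pow_char, mul_pow, mul_pow, ← C_pow, ← C_pow, ZMod.pow_card, ZMod.pow_card]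
  set T : Set (MvPolynomial (Fin 2) (ZMod p)) := Set.range (fun i : Fin 2 => (X i) ^ p) with hT
  have hLsingle : ∀ i : Fin 2, L (Pi.single i 1) = X i := by
    intro i
    rw [hL]
    fin_cases i <;> simp [Pi.single_apply, Fin.sum_univ_two]
  have hspan_eq : Submodule.span (ZMod p)
      {f : MvPolynomial (Fin 2) (ZMod p) |
        ∃ v w : Fin 2 → ZMod p, b v w = 0 ∧ f = (L v) ^ (p - 1) * (L w)} =
      Submodule.span (ZMod p) T := by
    apply le_antisymm
    · rw [Submodule.span_le]
      rintro f ⟨v, w, hbvw, rfl⟩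
      by_cases hv : v = 0
      · subst hv
        have : L (0 : Fin 2 → ZMod p) = 0 := by simp [hL]
        rw [this, zero_pow (Nat.sub_ne_zero_of_lt hp.one_lt), zero_mul]
        exact Submodule.zero_mem _
      · obtain ⟨c, rfl⟩ := hprop v w hv hbvw
        have hLc : L (c • v) = C c * L v := by
          simp only [hL, Pi.smul_apply, smul_eq_mul, C_mul, Fin.sum_univ_two]
          ring
        rw [hLc, mul_comm (L v ^ (p - 1)), mul_assoc, ← pow_succ', Nat.sub_add_cancel hp1,
          hLpow]
        rw [Fin.sum_univ_two, mul_add, ← mul_assoc, ← mul_assoc, ← C_mul, ← C_mul]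
        apply Submodule.add_mem
        · rw [← smul_eq_C_mul]
          exact Submodule.smul_mem _ _ (Submodule.subset_span ⟨0, rfl⟩)
        · rw [← smul_eq_C_mul]
          exact Submodule.smul_mem _ _ (Submodule.subset_span ⟨1, rfl⟩)
    · rw [Submodule.span_le]
      rintro f ⟨i, rfl⟩
      apply Submodule.subset_span
      refine ⟨Pi.single i 1, Pi.single i 1, halt _, ?_⟩
      show (X i : MvPolynomial (Fin 2) (ZMod p)) ^ p = (L _) ^ (p - 1) * (L _)
      rw [hLsingle i, ← pow_succ, Nat.sub_add_cancel hp1]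
  rw [show {f : MvPolynomial (Fin 2) (ZMod p) |
          ∃ v w : Fin 2 → ZMod p, b v w = 0 ∧
            f = (∑ i, C (v i) * X i) ^ (p - 1) * (∑ i, C (w i) * X i)} =
      {f : MvPolynomial (Fin 2) (ZMod p) |
        ∃ v w : Fin 2 → ZMod p, b v w = 0 ∧ f = (L v) ^ (p - 1) * (L w)} from rfl,
    hspan_eq, hT]
  have hli : LinearIndependent (ZMod p) (fun i : Fin 2 => (X i : MvPolynomial (Fin 2) (ZMod p)) ^ p) := by
    have : (fun i : Fin 2 => (X i : MvPolynomial (Fin 2) (ZMod p)) ^ p) =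
        (fun s : Fin 2 →₀ ℕ => (monomial s (1 : ZMod p))) ∘ (fun i => Finsupp.single i p) := by
      funext i
      simp [X_pow_eq_monomial]
    rw [this]
    refine LinearIndependent.comp ?_ _ ?_
    · have := (basisMonomials (Fin 2) (ZMod p)).linearIndependent
      rwa [coe_basisMonomials] at this
    · intro i j h
      by_contra hne
      have h2 := DFunLike.congr_fun h i
      rw [Finsupp.single_eq_same, Finsupp.single_eq_of_ne' (Ne.symm hne)] at h2
      exact hp.ne_zero h2
  rw [finrank_span_eq_card hli, Fintype.card_fin]
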